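/- Let n ≥ 1 and suppose X_1, …, X_h ∈ R satisfy f^{(n)}(X_i) = 0 for all i. Then μ_n(f(X_1), X_2, …, X_h) = g(μ_n(X_1, X_2, …, X_h)). -/

import Mathlib

open Finset

noncomputable section

/-- The Moore determinant `μ(X₁, …, X_h) = det (Xᵢ^{q^{j-1}})`. -/
def moore (q : ℕ) {h : ℕ} {R : Type*} [CommRing R] (X : Fin h → R) : R :=
  Matrix.det (Matrix.of fun i j : Fin h => X i ^ q ^ (j : ℕ))

/-- `f(X) = πX + u₁X^q + ⋯ + u_{h−1}X^{q^{h−1}} + X^{q^h}`. -/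
def fmap (q h : ℕ) {R : Type*} [CommRing R] (π : R) (u : ℕ → R) (X : R) : R :=
  π * X + (∑ k ∈ Finset.Ico 1 h, u k * X ^ q ^ k) + X ^ q ^ h

/-- `μ_n(X₁, …, X_h) = Σ μ(f^(a₁)(X₁), …, f^(a_h)(X_h))`, the sum over all tuples
`(a₁, …, a_h)` with `0 ≤ aᵢ ≤ n−1` and `a₁ + ⋯ + a_h = (h−1)(n−1)`. -/
def mooreN (q h n : ℕ) {R : Type*} [CommRing R] (π : R) (u : ℕ → R) (X : Fin h → R) : R :=
  ∑ a ∈ Finset.univ.filter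
      (fun a : Fin h → Fin n => ∑ i, (a i : ℕ) = (h - 1) * (n - 1)),
    moore q (fun i => (fmap q h π u)^[(a i : ℕ)] (X i))

/-- `g(T) = πT + (−1)^{h−1}T^q`. -/
def gmap (q h : ℕ) {R : Type*} [CommRing R] (π : R) (T : R) : R :=
  π * T + (-1) ^ (h - 1) * T ^ q

namespace MooreAux

variable {R : Type*} [CommRing R]

/-- The Moore matrix. -/
def mooreMat (q : ℕ) {d : ℕ} (W : Fin (d+1) → R) : Matrix (Fin (d+1)) (Fin (d+1)) R :=
  Matrix.of fun i j => W i ^ q ^ (j : ℕ)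

lemma moore_eq_det (q : ℕ) {d : ℕ} (W : Fin (d+1) → R) :
    moore q W = (mooreMat q W).det := rfl

/-- Minor: delete row `i` and column `0`. -/
def minor (q : ℕ) {d : ℕ} (W : Fin (d+1) → R) (i : Fin (d+1)) : R :=
  Matrix.det (Matrix.of fun r c : Fin d => W (i.succAbove r) ^ q ^ ((c : ℕ) + 1))

lemma minor_congr (q : ℕ) {d : ℕ} {V W : Fin (d+1) → R} (i : Fin (d+1))
    (h : ∀ j, j ≠ i → V j = W j) : minor q V i = minor q W i := by
  unfold minor
  congr 1
  ext r c
  rw [Matrix.of_apply, Matrix.of_apply, h _ (Fin.succAbove_ne i r)]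

/-- Laplace expansion along column 0, for the Moore matrix with column 0 replaced by `w`. -/
lemma expand_col (q : ℕ) {d : ℕ} (W : Fin (d+1) → R) (w : Fin (d+1) → R) :
    ((mooreMat q W).updateCol 0 w).det
      = ∑ i : Fin (d+1), (-1) ^ (i : ℕ) * w i * minor q W i := by
  rw [Matrix.det_succ_column_zero]
  refine Finset.sum_congr rfl fun i _ => ?_
  have h1 : ((mooreMat q W).updateCol 0 w) i 0 = w i := Matrix.updateCol_self
  have h2 : (((mooreMat q W).updateCol 0 w).submatrix i.succAbove Fin.succ).det
      = minor q W i := by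
    unfold minor
    refine congrArg Matrix.det ?_
    ext r c
    rw [Matrix.submatrix_apply, Matrix.updateCol_ne (Fin.succ_ne_zero c)]
    rfl
  rw [h1, h2]

lemma laplace (q : ℕ) {d : ℕ} (W : Fin (d+1) → R) :
    moore q W = ∑ i : Fin (d+1), (-1) ^ (i : ℕ) * W i * minor q W i := by
  have h1 : (mooreMat q W).updateCol 0 (fun i => W i) = mooreMat q W := by
    ext i j
    by_cases hj : j = 0
    · subst hj
      rw [Matrix.updateCol_self]
      simp [mooreMat]
    · rw [Matrix.updateCol_ne hj]
  rw [moore_eq_det, ← h1, expand_col]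

lemma det_updateColumn_finsum {n' : Type*} [DecidableEq n'] [Fintype n']
    (M : Matrix n' n' R) (j : n') {ι : Type*} (s : Finset ι) (g : ι → n' → R) :
    (M.updateCol j (fun i => ∑ k ∈ s, g k i)).det
      = ∑ k ∈ s, (M.updateCol j (g k)).det := by
  classical
  induction s using Finset.induction_on with
  | empty =>
      simp only [Finset.sum_empty]
      exact Matrix.det_eq_zero_of_column_eq_zero j (fun i => by rw [Matrix.updateCol_self])
  | @insert a s ha ih =>
      rw [Finset.sum_insert ha]
      have : (fun i => ∑ k ∈ insert a s, g k i)
          = (g a) + (fun i => ∑ k ∈ s, g k i) := by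
        funext i
        simp [Finset.sum_insert ha]
      rw [this, Matrix.det_updateCol_add, ih]


lemma moore_pow (q : ℕ) {d : ℕ} (φ : R →+* R) (hφ : ∀ x : R, φ x = x ^ q)
    (W : Fin (d+1) → R) :
    (moore q W) ^ q
      = (Matrix.of fun i (j : Fin (d+1)) => W i ^ q ^ ((j : ℕ) + 1)).det := by
  rw [moore_eq_det, ← hφ, RingHom.map_det]
  congr 1
  ext i j
  simp only [RingHom.mapMatrix_apply, Matrix.map_apply, Matrix.of_apply, hφ]
  show (W i ^ q ^ (j : ℕ)) ^ q = W i ^ q ^ ((j : ℕ) + 1)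
  rw [← pow_mul, ← pow_succ]

lemma sIdent (q : ℕ) {d : ℕ} (π : R) (u : ℕ → R)
    (φ : R →+* R) (hφ : ∀ x : R, φ x = x ^ q) (W : Fin (d+1) → R) :
    ∑ i : Fin (d+1), (-1) ^ (i : ℕ) * fmap q (d+1) π u (W i) * minor q W i
      = π * moore q W + (-1) ^ d * (moore q W) ^ q := by
  rw [← expand_col]
  have hcol : (fun i => fmap q (d+1) π u (W i))
      = (π • W) + ((fun i => ∑ k ∈ Finset.Ico 1 (d+1), u k * W i ^ q ^ k)
          + fun i => W i ^ q ^ (d+1)) := by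
    funext i
    simp only [fmap, Pi.add_apply, Pi.smul_apply, smul_eq_mul]
    ring
  rw [hcol, Matrix.det_updateCol_add, Matrix.det_updateCol_add]
  have t1 : ((mooreMat q W).updateCol 0 (π • W)).det = π * moore q W := by
    rw [Matrix.det_updateCol_smul]
    congr 1
    have h1 : (mooreMat q W).updateCol 0 (fun i => W i) = mooreMat q W := by
      ext i j
      by_cases hj : j = 0
      · subst hj
        rw [Matrix.updateCol_self]
        simp [mooreMat]
      · rw [Matrix.updateCol_ne hj]
    rw [show (W : Fin (d+1) → R) = fun i => W i from rfl] at h1 ⊢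
    rw [h1, moore_eq_det]
  have t2 : ((mooreMat q W).updateCol 0
      (fun i => ∑ k ∈ Finset.Ico 1 (d+1), u k * W i ^ q ^ k)).det = 0 := by
    rw [det_updateColumn_finsum]
    refine Finset.sum_eq_zero fun k hk => ?_
    rw [Finset.mem_Ico] at hk
    have hcolk : (fun i => u k * W i ^ q ^ k) = u k • (fun i => W i ^ q ^ k) := by
      funext i; simp
    rw [hcolk, Matrix.det_updateCol_smul]
    have hkf : ((0 : Fin (d+1)) ≠ (⟨k, hk.2⟩ : Fin (d+1))) := by
      intro hcon
      have := congrArg Fin.val hcon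
      simp at this
      omega
    rw [Matrix.det_zero_of_column_eq hkf ?_, mul_zero]
    intro r
    rw [Matrix.updateCol_self, Matrix.updateCol_ne (Ne.symm hkf)]
    rfl
  have t3 : ((mooreMat q W).updateCol 0 (fun i => W i ^ q ^ (d+1))).det
      = (-1) ^ d * (moore q W) ^ q := by
    set N := (mooreMat q W).updateCol 0 (fun i => W i ^ q ^ (d+1)) with hN
    have hsub : (Matrix.of fun i (j : Fin (d+1)) => W i ^ q ^ ((j : ℕ) + 1))
        = N.submatrix id (finRotate (d+1)) := by
      ext i j
      rw [Matrix.submatrix_apply, id_eq]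
      by_cases hj : j = Fin.last d
      · have h0 : finRotate (d+1) j = 0 := by
          apply Fin.ext
          rw [coe_finRotate, if_pos hj]
          simp
        rw [h0]
        show W i ^ q ^ ((j : ℕ) + 1) = N i 0
        rw [hN, Matrix.updateCol_self, hj, Fin.val_last]
      · have hne : finRotate (d+1) j ≠ 0 := by
          intro hcon
          have := congrArg Fin.val hcon
          rw [coe_finRotate, if_neg hj] at this
          simp at this
        rw [hN, Matrix.updateCol_ne hne]
        show W i ^ q ^ ((j : ℕ) + 1) = W i ^ q ^ ((finRotate (d+1) j : ℕ))
        rw [coe_finRotate, if_neg hj]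
    have hperm := Matrix.det_permute' (finRotate (d+1)) N
    rw [← hsub, sign_finRotate, Nat.add_sub_cancel] at hperm
    rw [moore_pow q φ hφ, hperm]
    have hcast : ((((-1 : ℤˣ) ^ d : ℤˣ) : ℤ) : R) = (-1 : R) ^ d := by
      push_cast
      rfl
    rw [hcast, ← mul_assoc, ← pow_add]
    have : Even (d + d) := ⟨d, rfl⟩
    rw [Even.neg_one_pow this, one_mul]
  rw [t1, t2, t3, zero_add]

lemma key (q : ℕ) {d : ℕ} (π : R) (u : ℕ → R)
    (φ : R →+* R) (hφ : ∀ x : R, φ x = x ^ q) (Y : Fin (d+1) → R) :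
    moore q (Function.update Y 0 (fmap q (d+1) π u (Y 0)))
      = π * moore q Y + (-1) ^ d * (moore q Y) ^ q
        + ∑ i ∈ Finset.univ.erase (0 : Fin (d+1)), (-1) ^ (i : ℕ) *
            (Y i * minor q (Function.update Y 0 (fmap q (d+1) π u (Y 0))) i
              - fmap q (d+1) π u (Y i) * minor q Y i) := by
  set f0 := fmap q (d+1) π u with hf0
  set Z := Function.update Y 0 (f0 (Y 0)) with hZdef
  have hz0 : Z 0 = f0 (Y 0) := Function.update_self _ _ _
  have hzi : ∀ i : Fin (d+1), i ≠ 0 → Z i = Y i := fun i hi => Function.update_of_ne hi _ _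
  have hm0 : minor q Z 0 = minor q Y 0 := minor_congr (q := q) 0 (fun j hj => hzi j hj)
  rw [laplace q Z]
  rw [← Finset.add_sum_erase _ _ (Finset.mem_univ (0 : Fin (d+1)))]
  have hs := sIdent q π u φ hφ Y
  rw [← Finset.add_sum_erase _ _ (Finset.mem_univ (0 : Fin (d+1)))] at hs
  simp only [Fin.val_zero, pow_zero, one_mul] at hs ⊢
  rw [hz0, hm0]
  have hsum1 : ∑ i ∈ Finset.univ.erase (0 : Fin (d+1)), (-1) ^ (i : ℕ) * Z i * minor q Z i
      = ∑ i ∈ Finset.univ.erase (0 : Fin (d+1)), (-1) ^ (i : ℕ) * Y i * minor q Z i :=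
    Finset.sum_congr rfl (fun i hi => by rw [hzi i (Finset.ne_of_mem_erase hi)])
  rw [hsum1]
  have hsplit : ∑ i ∈ Finset.univ.erase (0 : Fin (d+1)), (-1) ^ (i : ℕ) *
        (Y i * minor q Z i - f0 (Y i) * minor q Y i)
      = (∑ i ∈ Finset.univ.erase (0 : Fin (d+1)), (-1) ^ (i : ℕ) * Y i * minor q Z i)
        - ∑ i ∈ Finset.univ.erase (0 : Fin (d+1)), (-1) ^ (i : ℕ) * f0 (Y i) * minor q Y i := by
    rw [← Finset.sum_sub_distrib]
    exact Finset.sum_congr rfl fun i _ => by ring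
  rw [hsplit]
  linear_combination hs

lemma shift (d n : ℕ) (hn : 1 ≤ n) (i₀ : Fin (d+1))
    (G : (Fin (d+1) → ℕ) → R)
    (hG : ∀ b : Fin (d+1) → ℕ, (∃ j, n ≤ b j) → G b = 0) :
    ∑ a ∈ Finset.univ.filter
        (fun a : Fin (d+1) → Fin n => ∑ j, (a j : ℕ) = d * (n-1)),
      G (fun j => (a j : ℕ) + if j = i₀ then 1 else 0)
    = ∑ c ∈ Finset.univ.filter
        (fun c : Fin (d+1) → Fin (n+1) => ∑ j, (c j : ℕ) = d * (n-1) + 1),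
      G (fun j => (c j : ℕ)) := by
  classical
  set ι : (Fin (d+1) → Fin n) → (Fin (d+1) → Fin (n+1)) :=
    fun a j => if j = i₀ then (a j).succ else (a j).castSucc with hι
  have hval : ∀ (a : Fin (d+1) → Fin n) (j : Fin (d+1)),
      ((ι a j : ℕ)) = (a j : ℕ) + if j = i₀ then 1 else 0 := by
    intro a j
    by_cases hj : j = i₀ <;> simp [hι, hj]
  have hinj : Function.Injective ι := by
    intro a a' hh
    funext j
    have h1 := congrFun hh j
    by_cases hj : j = i₀
    · subst hj
      rw [hι] at h1
      simp only [if_pos] at h1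
      exact Fin.succ_injective _ h1
    · rw [hι] at h1
      simp only [hj, if_neg, ite_false] at h1
      exact Fin.castSucc_injective _ h1
  have step1 : ∑ a ∈ Finset.univ.filter
        (fun a : Fin (d+1) → Fin n => ∑ j, (a j : ℕ) = d * (n-1)),
      G (fun j => (a j : ℕ) + if j = i₀ then 1 else 0)
      = ∑ a ∈ Finset.univ.filter
        (fun a : Fin (d+1) → Fin n => ∑ j, (a j : ℕ) = d * (n-1)),
      G (fun j => (ι a j : ℕ)) :=
    Finset.sum_congr rfl fun a _ => congrArg G (funext fun j => (hval a j).symm)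
  rw [step1]
  have step2 : ∑ a ∈ Finset.univ.filter
        (fun a : Fin (d+1) → Fin n => ∑ j, (a j : ℕ) = d * (n-1)),
      G (fun j => (ι a j : ℕ))
      = ∑ c ∈ (Finset.univ.filter
        (fun a : Fin (d+1) → Fin n => ∑ j, (a j : ℕ) = d * (n-1))).image ι,
      G (fun j => (c j : ℕ)) := by
    exact (Finset.sum_image (g := ι)
      (f := fun c : Fin (d+1) → Fin (n+1) => G (fun j => (c j : ℕ)))
      (fun x _ y _ hxy => hinj hxy)).symm
  rw [step2]
  refine Finset.sum_subset ?_ ?_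
  · intro c hc
    rw [Finset.mem_image] at hc
    obtain ⟨a, ha, rfl⟩ := hc
    rw [Finset.mem_filter] at ha ⊢
    refine ⟨Finset.mem_univ _, ?_⟩
    have : ∀ j, ((ι a j : ℕ)) = (a j : ℕ) + if j = i₀ then 1 else 0 := hval a
    rw [Finset.sum_congr rfl fun j _ => this j, Finset.sum_add_distrib,
      Fintype.sum_ite_eq' i₀ (fun _ => 1), ha.2]
  · intro c hc hcim
    by_cases hbig : ∃ j, n ≤ (c j : ℕ)
    · exact hG _ hbig
    · exfalso
      apply hcim
      push_neg at hbig
      have hsum : ∑ j, (c j : ℕ) = d * (n-1) + 1 := (Finset.mem_filter.mp hc).2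
      have hcard : (Finset.univ.erase i₀).card = d := by
        rw [Finset.card_erase_of_mem (Finset.mem_univ _), Finset.card_univ,
          Fintype.card_fin]
        omega
      have hi0 : 1 ≤ (c i₀ : ℕ) := by
        by_contra h0
        push_neg at h0
        rw [Nat.lt_one_iff] at h0
        have hb : ∀ j ∈ Finset.univ.erase i₀, (c j : ℕ) ≤ n - 1 :=
          fun j _ => Nat.le_sub_one_of_lt (hbig j)
        have hle := Finset.sum_le_card_nsmul (Finset.univ.erase i₀)
          (fun j => (c j : ℕ)) (n-1) hb
        rw [hcard, smul_eq_mul] at hle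
        rw [← Finset.add_sum_erase _ _ (Finset.mem_univ i₀), h0, zero_add] at hsum
        omega
      obtain ⟨a, ha⟩ : ∃ a : Fin (d+1) → Fin n,
          ∀ j, (a j : ℕ) = (c j : ℕ) - (if j = i₀ then 1 else 0) := by
        refine ⟨fun j => ⟨(c j : ℕ) - (if j = i₀ then 1 else 0), ?_⟩, fun j => rfl⟩
        have := hbig j
        split <;> omega
      refine Finset.mem_image.mpr ⟨a, ?_, ?_⟩
      · rw [Finset.mem_filter]
        refine ⟨Finset.mem_univ _, ?_⟩
        rw [← Finset.add_sum_erase _ _ (Finset.mem_univ i₀)]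
        rw [← Finset.add_sum_erase _ _ (Finset.mem_univ i₀)] at hsum
        have h2 : ∀ j ∈ Finset.univ.erase i₀, (a j : ℕ) = (c j : ℕ) := by
          intro j hj
          rw [ha j, if_neg (Finset.ne_of_mem_erase hj), Nat.sub_zero]
        rw [Finset.sum_congr rfl h2, ha i₀, if_pos rfl]
        omega
      · funext j
        by_cases hj : j = i₀
        · subst hj
          apply Fin.ext
          rw [hι]
          simp only [if_pos]
          rw [Fin.val_succ, ha j, if_pos rfl]
          omega
        · apply Fin.ext
          rw [hι]
          simp only [hj, if_neg, ite_false]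
          rw [Fin.coe_castSucc, ha j, if_neg hj, Nat.sub_zero]

lemma main_aux (q d n : ℕ) (hn : 1 ≤ n) (π : R) (u : ℕ → R)
    (φ : R →+* R) (hφ : ∀ x : R, φ x = x ^ q) (hq0 : q ≠ 0)
    (X : Fin (d+1) → R) (hX : ∀ i, (fmap q (d+1) π u)^[n] (X i) = 0) :
    mooreN q (d+1) n π u (Function.update X 0 (fmap q (d+1) π u (X 0)))
      = gmap q (d+1) π (mooreN q (d+1) n π u X) := by
  classical
  have hf0 : fmap q (d+1) π u 0 = 0 := by
    have h1 : ∀ m : ℕ, (0:R) ^ q ^ m = 0 := fun m => zero_pow (pow_ne_zero m hq0)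
    simp [fmap, h1]
  have hXn : ∀ (i : Fin (d+1)) (b : ℕ), n ≤ b → (fmap q (d+1) π u)^[b] (X i) = 0 := by
    intro i b hb
    obtain ⟨k, rfl⟩ := Nat.exists_eq_add_of_le hb
    rw [show n + k = k + n from Nat.add_comm n k, Function.iterate_add_apply,
      hX i, Function.iterate_fixed hf0]
  set f1 := fmap q (d+1) π u with hf1
  set T : Fin (d+1) → (Fin (d+1) → ℕ) → R :=
    fun i b => f1^[b i] (X i) * minor q (fun j => f1^[b j] (X j)) i with hT
  have hTvan : ∀ i : Fin (d+1), ∀ b : Fin (d+1) → ℕ, (∃ j, n ≤ b j) → T i b = 0 := by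
    rintro i b ⟨j, hj⟩
    by_cases hji : j = i
    · subst hji
      rw [hT]
      simp only
      rw [hXn j _ hj, zero_mul]
    · rw [hT]
      simp only
      have hmz : minor q (fun j' => f1^[b j'] (X j')) i = 0 := by
        obtain ⟨r, hr⟩ := Fin.exists_succAbove_eq hji
        unfold minor
        apply Matrix.det_eq_zero_of_row_eq_zero r
        intro c
        rw [Matrix.of_apply, hr]
        show f1^[b j] (X j) ^ q ^ ((c : ℕ) + 1) = 0
        rw [hXn j _ hj, zero_pow (pow_ne_zero _ hq0)]
      rw [hmz, mul_zero]
  unfold mooreN gmap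
  simp only [Nat.add_sub_cancel]
  set A := Finset.univ.filter
    (fun a : Fin (d+1) → Fin n => ∑ i, (a i : ℕ) = d * (n-1)) with hA
  have hLstep : ∀ a ∈ A,
      moore q (fun i => f1^[(a i : ℕ)] (Function.update X 0 (f1 (X 0)) i))
        = π * moore q (fun j => f1^[(a j : ℕ)] (X j))
          + (-1)^d * (moore q (fun j => f1^[(a j : ℕ)] (X j)))^q
          + ∑ i ∈ Finset.univ.erase (0 : Fin (d+1)), (-1)^(i:ℕ) *
              (T i (fun j => (a j : ℕ) + if j = 0 then 1 else 0)
                - T i (fun j => (a j : ℕ) + if j = i then 1 else 0)) := by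
    intro a _
    set Y := fun j : Fin (d+1) => f1^[(a j : ℕ)] (X j) with hY
    have h1 : (fun i => f1^[(a i : ℕ)] (Function.update X 0 (f1 (X 0)) i))
        = Function.update Y 0 (f1 (Y 0)) := by
      funext i
      by_cases hi : i = 0
      · subst hi
        rw [Function.update_self, Function.update_self]
        simp only [hY]
        rw [← Function.iterate_succ_apply]
        exact Function.iterate_succ_apply' f1 _ _
      · rw [Function.update_of_ne hi, Function.update_of_ne hi]
    rw [h1, key q π u φ hφ Y]
    congr 1
    refine Finset.sum_congr rfl fun i hi => ?_
    have hi0 : i ≠ 0 := Finset.ne_of_mem_erase hi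
    have hupd : Function.update Y 0 (f1 (Y 0))
        = (fun j => f1^[(a j : ℕ) + if j = 0 then 1 else 0] (X j)) := by
      funext j
      by_cases hj : j = 0
      · subst hj
        rw [Function.update_self, if_pos rfl]
        simp only [hY]
        exact (Function.iterate_succ_apply' f1 _ _).symm
      · rw [Function.update_of_ne hj, if_neg hj, add_zero]
    have e1 : T i (fun j => (a j : ℕ) + if j = 0 then 1 else 0)
        = Y i * minor q (Function.update Y 0 (f1 (Y 0))) i := by
      rw [hT]
      simp only
      rw [← hupd, if_neg hi0, add_zero]
    have e2 : T i (fun j => (a j : ℕ) + if j = i then 1 else 0)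
        = f1 (Y i) * minor q Y i := by
      rw [hT]
      simp only
      have hmi : minor q (fun j => f1^[(a j : ℕ) + if j = i then 1 else 0] (X j)) i
          = minor q Y i :=
        minor_congr (q := q) i fun j hj => by
          rw [if_neg hj, add_zero]
      rw [hmi]
      simp [hY, Function.iterate_succ_apply']
    rw [e1, e2]
  rw [Finset.sum_congr rfl hLstep, Finset.sum_add_distrib, Finset.sum_add_distrib]
  have hE : ∑ a ∈ A, ∑ i ∈ Finset.univ.erase (0 : Fin (d+1)), (-1)^(i:ℕ) *
      (T i (fun j => (a j : ℕ) + if j = 0 then 1 else 0)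
        - T i (fun j => (a j : ℕ) + if j = i then 1 else 0)) = 0 := by
    rw [Finset.sum_comm]
    refine Finset.sum_eq_zero fun i hi => ?_
    rw [← Finset.mul_sum, Finset.sum_sub_distrib]
    have s1 := shift (R := R) d n hn 0 (T i) (hTvan i)
    have s2 := shift (R := R) d n hn i (T i) (hTvan i)
    rw [hA, s1, s2, sub_self, mul_zero]
  rw [hE, add_zero]
  have hpow : (∑ a ∈ A, moore q (fun j => f1^[(a j : ℕ)] (X j)))^q
      = ∑ a ∈ A, (moore q (fun j => f1^[(a j : ℕ)] (X j)))^q := by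
    rw [← hφ, map_sum]
    exact Finset.sum_congr rfl fun a _ => hφ _
  rw [hpow, Finset.mul_sum, Finset.mul_sum]

end MooreAux

/-- Let `n ≥ 1` and suppose `f^(n)(Xᵢ) = 0` for all `i`. Then
`μ_n(f(X₁), X₂, …, X_h) = g(μ_n(X₁, X₂, …, X_h))`. -/
theorem mooreN_fmap_first_eq_gmap_mooreN
    (p e q h n : ℕ) (hp : p.Prime) (he : 1 ≤ e) (hq : q = p ^ e) (hh : 1 ≤ h) (hn : 1 ≤ n)
    (K : Type*) [Field K] [Fintype K] [DecidableEq K] (hK : Fintype.card K = q)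
    (R : Type*) [CommRing R] [Algebra K R]
    (π : R) (u : ℕ → R) (X : Fin h → R)
    (hX : ∀ i, (fmap q h π u)^[n] (X i) = 0) :
    mooreN q h n π u (Function.update X ⟨0, hh⟩ (fmap q h π u (X ⟨0, hh⟩)))
      = gmap q h π (mooreN q h n π u X) := by
  obtain ⟨d, rfl⟩ : ∃ d, h = d + 1 := ⟨h - 1, by omega⟩
  rcases subsingleton_or_nontrivial R with hR | hR
  · exact Subsingleton.elim _ _
  · obtain ⟨p', hp'c⟩ := CharP.exists K
    haveI := hp'c
    obtain ⟨m, hp', hcard⟩ := FiniteField.card K p'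
    have hpp' : p = p' := by
      have h1 : p ∣ p' ^ (m : ℕ) := by
        rw [← hcard, hK, hq]
        exact dvd_pow_self p (by omega)
      exact (Nat.prime_dvd_prime_iff_eq hp hp').mp (hp.dvd_of_dvd_pow h1)
    subst hpp'
    haveI : CharP R p := charP_of_injective_algebraMap (algebraMap K R).injective p
    haveI : Fact p.Prime := ⟨hp⟩
    have hφ : ∀ x : R, (iterateFrobenius R p e) x = x ^ q := by
      intro x
      rw [iterateFrobenius_def, hq]
    have hq0 : q ≠ 0 := by
      rw [hq]
      exact pow_ne_zero _ hp.ne_zero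
    have h0 : (⟨0, hh⟩ : Fin (d+1)) = 0 := by
      apply Fin.ext
      simp
    rw [h0]
    exact MooreAux.main_aux q d n hn π u (iterateFrobenius R p e) hφ hq0 X hX
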